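/- Let G=(V,C,S,T) be a flow graph with symmetric nonnegative capacities C, sources S and sinks T. Given a leaky flow w̃ (a nonnegative function on V×V satisfying the capacity constraints w̃(u,v)+w̃(v,u) ≤ C(u,v) for all u,v, but not necessarily flow conservation), there exists a feasible flow w of G such that val(w) ≥ val(w̃) − Σ_{v ∈ V∖(S∪T)} |leak_{w̃}(v)|, where leak_{w̃}(v) = inflow(v) − outflow(v) and val is the net outflow from the sources. -/

import Mathlib

open Finset

/-- A flow `w` on a flow graph with capacities `C`, sources `S` and sinks `T` is feasible if it
is nonnegative, respects the capacity constraints, and conserves flow at every non-terminal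
vertex. -/
def IsFeasibleFlow {V : Type*} [Fintype V] (C : V → V → ℝ) (S T : Finset V)
    (w : V → V → ℝ) : Prop :=
  (∀ u v, 0 ≤ w u v) ∧ (∀ u v, w u v + w v u ≤ C u v) ∧
    ∀ v, v ∉ S → v ∉ T → (∑ u, w v u) = (∑ u, w u v)

/-- The value of a flow: net outflow from the sources. -/
def flowVal {V : Type*} [Fintype V] (S : Finset V) (w : V → V → ℝ) : ℝ :=
  ∑ s ∈ S, ((∑ u, w s u) - ∑ u, w u s)


lemma single_edge_excess {V : Type*} [Fintype V] [DecidableEq V] (b c : V) (δ : ℝ) (v : V) :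
    (∑ u, (if v = b ∧ u = c then δ else 0)) - (∑ u, (if u = b ∧ v = c then δ else 0)) =
      δ * ((if v = b then 1 else 0) - (if v = c then 1 else 0)) := by
  have h1 : (∑ u, (if v = b ∧ u = c then δ else 0)) = if v = b then δ else 0 := by
    by_cases hv : v = b <;> simp [hv]
  have h2 : (∑ u, (if u = b ∧ v = c then δ else 0)) = if v = c then δ else 0 := by
    by_cases hv : v = c <;> simp [hv]
  rw [h1, h2]; split_ifs <;> ring

lemma exists_path_flow {V : Type*} [Fintype V] [DecidableEq V] (d : V → V → ℝ)
    (hd : ∀ u v, 0 ≤ d u v) {a b : V} (h : Relation.ReflTransGen (fun u v => 0 < d u v) a b) :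
    b = a ∨ ∃ (g : V → V → ℝ) (ε : ℝ), 0 < ε ∧ (∀ u v, 0 ≤ g u v) ∧ (∀ u v, g u v ≤ d u v) ∧
      ∀ v, (∑ u, g v u) - (∑ u, g u v) =
        ε * ((if v = a then 1 else 0) - (if v = b then 1 else 0)) := by
  induction h with
  | refl => exact Or.inl rfl
  | @tail b c hab hbc ih =>
    by_cases hca : c = a
    · exact Or.inl hca
    right
    rcases ih with hba | ⟨g, ε, hε, hg0, hgd, hex⟩
    · have hac : 0 < d a c := by rw [hba] at hbc; exact hbc
      refine ⟨fun u v => if u = a ∧ v = c then d a c else 0, d a c, hac, ?_, ?_, ?_⟩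
      · intro u v; dsimp only; split
        · exact hac.le
        · exact le_refl 0
      · intro u v; dsimp only; split
        · rcases ‹u = a ∧ v = c› with ⟨rfl, rfl⟩; exact le_refl _
        · exact hd u v
      · intro v; exact single_edge_excess a c (d a c) v
    · by_cases hcb : c = b
      · exact hcb ▸ ⟨g, ε, hε, hg0, hgd, hex⟩
      · set δ := min ε (d b c) / 2 with hδ
        have hδpos : 0 < δ := by positivity
        have hδε : δ / ε ≤ 1/2 := by
          rw [div_le_iff₀ hε]
          have : δ ≤ ε/2 := by rw [hδ]; have := min_le_left ε (d b c); linarith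
          linarith
        have hδd : δ ≤ d b c / 2 := by
          rw [hδ]; have := min_le_right ε (d b c); linarith
        have hδε0 : 0 ≤ δ / ε := by positivity
        refine ⟨fun u v => (δ/ε) * g u v + (if u = b ∧ v = c then δ else 0), δ, hδpos, ?_, ?_, ?_⟩
        · intro u v
          have h0 : 0 ≤ (δ/ε) * g u v := mul_nonneg hδε0 (hg0 u v)
          dsimp only; split <;> linarith [hδpos.le]
        · intro u v
          have h1 : (δ/ε) * g u v ≤ (1/2) * d u v := by
            calc (δ/ε) * g u v ≤ (1/2) * g u v :=
                  mul_le_mul_of_nonneg_right hδε (hg0 u v)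
              _ ≤ (1/2) * d u v := by linarith [hgd u v]
          dsimp only; split
          · rcases ‹u = b ∧ v = c› with ⟨rfl, rfl⟩; linarith
          · linarith [hd u v]
        · intro v
          have hsum1 : (∑ u, ((δ/ε) * g v u + (if v = b ∧ u = c then δ else 0)))
              = (δ/ε) * (∑ u, g v u) + ∑ u, (if v = b ∧ u = c then δ else 0) := by
            rw [Finset.sum_add_distrib, Finset.mul_sum]
          have hsum2 : (∑ u, ((δ/ε) * g u v + (if u = b ∧ v = c then δ else 0)))
              = (δ/ε) * (∑ u, g u v) + ∑ u, (if u = b ∧ v = c then δ else 0) := by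
            rw [Finset.sum_add_distrib, Finset.mul_sum]
          simp only [hsum1, hsum2]
          have hεne : ε ≠ 0 := ne_of_gt hε
          have hkey : (δ/ε) * ((∑ u, g v u) - (∑ u, g u v))
              = δ * ((if v = a then 1 else 0) - (if v = b then 1 else 0)) := by
            rw [hex v]; field_simp
          have hse := single_edge_excess b c δ v
          have : ((δ/ε) * (∑ u, g v u) + ∑ u, (if v = b ∧ u = c then δ else 0))
              - ((δ/ε) * (∑ u, g u v) + ∑ u, (if u = b ∧ v = c then δ else 0))
              = (δ/ε) * ((∑ u, g v u) - (∑ u, g u v))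
                + (((∑ u, (if v = b ∧ u = c then δ else 0)))
                  - (∑ u, (if u = b ∧ v = c then δ else 0))) := by ring
          rw [this, hkey, hse]
          by_cases hva : v = a <;> by_cases hvb : v = b <;> by_cases hvc : v = c <;>
            simp [hva, hvb, hvc] <;> simp_all <;> ring

/-- Given a leaky flow `wt` (nonnegative, satisfying the capacity constraints but not
necessarily conservation of flow), there exists a feasible flow whose value is at least the
value of `wt` minus the sum of the absolute values of the leaks. -/
theorem leaky_flow_to_feasible_flow {V : Type*} [Fintype V] [DecidableEq V]
    (C : V → V → ℝ) (hC0 : ∀ u v, 0 ≤ C u v) (hCsymm : ∀ u v, C u v = C v u)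
    (S T : Finset V) (hST : Disjoint S T)
    (wt : V → V → ℝ) (hwt0 : ∀ u v, 0 ≤ wt u v)
    (hwtC : ∀ u v, wt u v + wt v u ≤ C u v) :
    ∃ w : V → V → ℝ, IsFeasibleFlow C S T w ∧
      flowVal S w ≥ flowVal S wt -
        ∑ v ∈ univ \ (S ∪ T), |(∑ u, wt u v) - (∑ u, wt v u)| := by
  classical
  set P : Set (V → V → ℝ) := {w | (∀ u v, 0 ≤ w u v) ∧ (∀ u v, w u v ≤ wt u v) ∧
    ∀ v, v ∉ S → v ∉ T → (∑ u, w v u) = (∑ u, w u v)} with hPdef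
  have hPne : (0 : V → V → ℝ) ∈ P := by
    refine ⟨fun u v => le_refl 0, fun u v => hwt0 u v, fun v _ _ => by simp⟩
  have hcl : IsClosed {w : V → V → ℝ | ∀ v, v ∉ S → v ∉ T →
      (∑ u, w v u) = (∑ u, w u v)} := by
    rw [Set.setOf_forall]
    refine isClosed_iInter fun v => ?_
    by_cases hv : v ∉ S ∧ v ∉ T
    · have heq : {w : V → V → ℝ | v ∉ S → v ∉ T → (∑ u, w v u) = (∑ u, w u v)}
          = {w | (∑ u, w v u) = (∑ u, w u v)} := by
        ext w; simp [hv.1, hv.2]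
      rw [heq]
      exact isClosed_eq
        (continuous_finset_sum _ fun u _ => (continuous_apply u).comp (continuous_apply v))
        (continuous_finset_sum _ fun u _ => (continuous_apply v).comp (continuous_apply u))
    · have heq : {w : V → V → ℝ | v ∉ S → v ∉ T → (∑ u, w v u) = (∑ u, w u v)}
          = Set.univ := by
        ext w; simp only [Set.mem_setOf_eq, Set.mem_univ, iff_true]
        intro h1 h2; exact absurd ⟨h1, h2⟩ hv
      rw [heq]; exact isClosed_univ
  have hPc : IsCompact P := by
    have h1 : P = Set.Icc (0 : V → V → ℝ) wt ∩ {w | ∀ v, v ∉ S → v ∉ T →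
        (∑ u, w v u) = (∑ u, w u v)} := by
      ext w
      simp only [hPdef, Set.mem_setOf_eq, Set.mem_inter_iff, Set.mem_Icc, Pi.le_def,
        Pi.zero_apply]
      tauto
    rw [h1]
    exact (isCompact_Icc).inter_right hcl
  have hcont : Continuous (flowVal S : (V → V → ℝ) → ℝ) := by
    unfold flowVal
    exact continuous_finset_sum _ fun s _ => Continuous.sub
      (continuous_finset_sum _ fun u _ => (continuous_apply u).comp (continuous_apply s))
      (continuous_finset_sum _ fun u _ => (continuous_apply s).comp (continuous_apply u))
  obtain ⟨w, hwP, hmax⟩ := hPc.exists_isMaxOn ⟨0, hPne⟩ hcont.continuousOn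
  obtain ⟨hw0, hwle, hwcons⟩ := hwP
  refine ⟨w, ⟨hw0, fun u v => by linarith [hwle u v, hwle v u, hwtC u v], hwcons⟩, ?_⟩
  -- residual
  set d : V → V → ℝ := fun u v => wt u v - w u v with hd
  have hd0 : ∀ u v, 0 ≤ d u v := fun u v => by
    simp only [hd]; linarith [hwle u v]
  set A : Finset V := univ.filter
    (fun v => ∃ s ∈ S, Relation.ReflTransGen (fun u v => 0 < d u v) s v) with hA
  have hSA : S ⊆ A := fun s hs =>
    Finset.mem_filter.mpr ⟨mem_univ s, s, hs, Relation.ReflTransGen.refl⟩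
  have hclosure : ∀ v ∈ A, ∀ u, 0 < d v u → u ∈ A := by
    intro v hv u hdu
    obtain ⟨s, hs, hrtg⟩ := (Finset.mem_filter.mp hv).2
    exact Finset.mem_filter.mpr ⟨mem_univ u, s, hs, hrtg.tail hdu⟩
  have hTA : ∀ t ∈ T, t ∉ A := by
    intro t ht hta
    obtain ⟨s, hs, hrtg⟩ := (Finset.mem_filter.mp hta).2
    have hsT : s ∉ T := Finset.disjoint_left.mp hST hs
    have hts : t ≠ s := fun h => hsT (h ▸ ht)
    rcases exists_path_flow d hd0 hrtg with h | ⟨g, ε, hε, hg0, hgd, hex⟩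
    · exact hts h
    · have htS : t ∉ S := Finset.disjoint_right.mp hST ht
      have hw' : (fun u v => w u v + g u v) ∈ P := by
        refine ⟨fun u v => add_nonneg (hw0 u v) (hg0 u v), fun u v => ?_, fun v hvS hvT => ?_⟩
        · have := hgd u v; simp only [hd] at this; dsimp only; linarith
        · dsimp only
          have h1 := hwcons v hvS hvT
          have h2 := hex v
          have hvs : v ≠ s := fun h => hvS (h ▸ hs)
          have hvt : v ≠ t := fun h => hvT (h ▸ ht)
          simp only [hvs, hvt, if_false] at h2
          rw [Finset.sum_add_distrib, Finset.sum_add_distrib]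
          have : (∑ u, g v u) = ∑ u, g u v := by linarith
          linarith
      have hval : flowVal S (fun u v => w u v + g u v)
          = flowVal S w + ∑ s' ∈ S, ((∑ u, g s' u) - ∑ u, g u s') := by
        unfold flowVal
        dsimp only
        rw [← Finset.sum_add_distrib]
        refine Finset.sum_congr rfl fun s' _ => ?_
        rw [Finset.sum_add_distrib, Finset.sum_add_distrib]; ring
      have hsum : ∑ s' ∈ S, ((∑ u, g s' u) - ∑ u, g u s') = ε := by
        have hc : ∀ s' ∈ S, ((∑ u, g s' u) - ∑ u, g u s')
            = ε * ((if s' = s then (1:ℝ) else 0) - (if s' = t then 1 else 0)) :=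
          fun s' _ => hex s'
        rw [Finset.sum_congr rfl hc, ← Finset.mul_sum, Finset.sum_sub_distrib]
        have h1 : ∑ s' ∈ S, (if s' = s then (1:ℝ) else 0) = 1 := by
          rw [Finset.sum_ite_eq' S s fun _ => (1:ℝ)]; simp [hs]
        have h2 : ∑ s' ∈ S, (if s' = t then (1:ℝ) else 0) = 0 := by
          rw [Finset.sum_ite_eq' S t fun _ => (1:ℝ)]; simp [htS]
        rw [h1, h2]; ring
      have hle := isMaxOn_iff.mp hmax _ hw'
      rw [hval, hsum] at hle
      linarith
  -- cut argument
  have hcut : ∑ v ∈ A, ((∑ u, d v u) - (∑ u, d u v)) ≤ 0 := by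
    have e1 : ∑ v ∈ A, ((∑ u, d v u) - (∑ u, d u v))
        = (∑ v ∈ A, ∑ u ∈ A, (d v u - d u v))
          + ∑ v ∈ A, ∑ u ∈ univ \ A, (d v u - d u v) := by
      rw [← Finset.sum_add_distrib]
      refine Finset.sum_congr rfl fun v _ => ?_
      have hs : (∑ u, d v u) - (∑ u, d u v) = ∑ u, (d v u - d u v) :=
        (Finset.sum_sub_distrib _ _).symm
      rw [hs, ← Finset.sum_sdiff (Finset.subset_univ A)]
      ring
    have e2 : (∑ v ∈ A, ∑ u ∈ A, (d v u - d u v)) = 0 := by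
      have hc : ∀ v ∈ A, ∑ u ∈ A, (d v u - d u v)
          = (∑ u ∈ A, d v u) - ∑ u ∈ A, d u v := fun v _ => Finset.sum_sub_distrib _ _
      rw [Finset.sum_congr rfl hc, Finset.sum_sub_distrib, Finset.sum_comm]
      exact sub_self _
    have e3 : ∑ v ∈ A, ∑ u ∈ univ \ A, (d v u - d u v) ≤ 0 := by
      apply Finset.sum_nonpos; intro v hv
      apply Finset.sum_nonpos; intro u hu
      have huA : u ∉ A := (Finset.mem_sdiff.mp hu).2
      have hdvu : d v u ≤ 0 := by
        by_contra hcon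
        push_neg at hcon
        exact huA (hclosure v hv u hcon)
      linarith [hd0 u v]
    rw [e1, e2]; linarith
  have hAsplit : ∑ v ∈ A, ((∑ u, d v u) - (∑ u, d u v))
      = (flowVal S wt - flowVal S w)
        + ∑ v ∈ A \ S, ((∑ u, wt v u) - (∑ u, wt u v)) := by
    rw [← Finset.sum_sdiff hSA]
    have h1 : ∑ v ∈ S, ((∑ u, d v u) - (∑ u, d u v)) = flowVal S wt - flowVal S w := by
      unfold flowVal
      rw [← Finset.sum_sub_distrib]
      refine Finset.sum_congr rfl fun v _ => ?_
      simp only [hd]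
      rw [Finset.sum_sub_distrib, Finset.sum_sub_distrib]; ring
    have h2 : ∀ v ∈ A \ S, ((∑ u, d v u) - (∑ u, d u v))
        = (∑ u, wt v u) - (∑ u, wt u v) := by
      intro v hv
      have hvS : v ∉ S := (Finset.mem_sdiff.mp hv).2
      have hvA : v ∈ A := (Finset.mem_sdiff.mp hv).1
      have hvT : v ∉ T := fun h => hTA v h hvA
      have hc := hwcons v hvS hvT
      simp only [hd]
      rw [Finset.sum_sub_distrib, Finset.sum_sub_distrib]
      linarith
    rw [h1, Finset.sum_congr rfl h2]
    ring
  have hsub : A \ S ⊆ univ \ (S ∪ T) := by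
    intro v hv
    rw [Finset.mem_sdiff] at hv ⊢
    exact ⟨mem_univ v, fun h => (Finset.mem_union.mp h).elim hv.2 (fun ht => hTA v ht hv.1)⟩
  have hbound : ∑ v ∈ A \ S, ((∑ u, wt v u) - (∑ u, wt u v))
      ≥ -∑ v ∈ univ \ (S ∪ T), |(∑ u, wt u v) - (∑ u, wt v u)| := by
    calc -∑ v ∈ univ \ (S ∪ T), |(∑ u, wt u v) - (∑ u, wt v u)|
        ≤ -∑ v ∈ A \ S, |(∑ u, wt u v) - (∑ u, wt v u)| := by
          apply neg_le_neg
          exact Finset.sum_le_sum_of_subset_of_nonneg hsub (fun v _ _ => abs_nonneg _)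
      _ = ∑ v ∈ A \ S, -|(∑ u, wt u v) - (∑ u, wt v u)| := by
          rw [Finset.sum_neg_distrib]
      _ ≤ ∑ v ∈ A \ S, ((∑ u, wt v u) - (∑ u, wt u v)) := by
          apply Finset.sum_le_sum
          intro v _
          have := le_abs_self ((∑ u, wt u v) - (∑ u, wt v u))
          linarith
  linarith [hcut, hAsplit, hbound]
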